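/- Let p1, q1 be partitions of n1 and p2, q2 be partitions of n2. If p1 dominates q1 and p2 dominates q2 (in the dominance order), then the union p1 ⊔ p2 (merging the multisets of parts and reordering non-increasingly) dominates q1 ⊔ q2 as partitions of n1 + n2. -/

import Mathlib

/-- Sum of the `t` largest elements of a multiset of naturals. -/
def sumLargest (M : Multiset ℕ) (t : ℕ) : ℕ := (((M.sort (· ≤ ·)).reverse).take t).sum

/-- Dominance order: for every `t`, the sum of the `t` largest parts of `M` is at least
that of `N`. -/
def Dom (M N : Multiset ℕ) : Prop := ∀ t, sumLargest N t ≤ sumLargest M t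

lemma sumLargest_mono (M : Multiset ℕ) {a b : ℕ} (hab : a ≤ b) :
    sumLargest M a ≤ sumLargest M b := by
  unfold sumLargest
  set l := (M.sort (· ≤ ·)).reverse with hl
  have h1 : l.take a = (l.take b).take a := by
    rw [List.take_take, min_eq_left hab]
  calc (l.take a).sum = ((l.take b).take a).sum := by rw [← h1]
    _ ≤ ((l.take b).take a).sum + ((l.take b).drop a).sum := Nat.le_add_right _ _
    _ = (l.take b).sum := by rw [← List.sum_append, List.take_append_drop]

lemma exists_max (M : Multiset ℕ) (h : M ≠ 0) : ∃ m ∈ M, ∀ x ∈ M, x ≤ m := by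
  induction M using Multiset.induction with
  | empty => exact absurd rfl h
  | cons a s ih =>
    rcases eq_or_ne s 0 with rfl | hs
    · exact ⟨a, Multiset.mem_cons_self a 0, by simp⟩
    · obtain ⟨m, hm, hmax⟩ := ih hs
      rcases le_total a m with hle | hle
      · exact ⟨m, Multiset.mem_cons_of_mem hm, by
          intro x hx
          rcases Multiset.mem_cons.1 hx with rfl | hx
          · exact hle
          · exact hmax x hx⟩
      · exact ⟨a, Multiset.mem_cons_self a s, by
          intro x hx
          rcases Multiset.mem_cons.1 hx with rfl | hx
          · exact le_refl x
          · exact (hmax x hx).trans hle⟩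

lemma sort_max_decomp (M : Multiset ℕ) (m : ℕ) (hm : m ∈ M) (hmax : ∀ x ∈ M, x ≤ m) :
    M.sort (· ≤ ·) = (M.erase m).sort (· ≤ ·) ++ [m] := by
  refine List.Perm.eq_of_pairwise' (r := (· ≤ ·)) ?_ ?_ ?_
  rotate_right
  · rw [← Multiset.coe_eq_coe, Multiset.sort_eq, ← Multiset.coe_add, Multiset.sort_eq,
      Multiset.coe_singleton, add_comm, Multiset.singleton_add, Multiset.cons_erase hm]
  · exact Multiset.pairwise_sort _ _
  · refine List.pairwise_append.2 ⟨Multiset.pairwise_sort _ _, List.pairwise_singleton _ m, ?_⟩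
    intro x hx y hy
    rw [List.mem_singleton.1 hy]
    exact hmax x (Multiset.mem_of_mem_erase ((Multiset.mem_sort _).1 hx))

lemma sumLargest_succ_max (M : Multiset ℕ) (m : ℕ) (hm : m ∈ M) (hmax : ∀ x ∈ M, x ≤ m)
    (t : ℕ) : sumLargest M (t + 1) = m + sumLargest (M.erase m) t := by
  unfold sumLargest
  rw [sort_max_decomp M m hm hmax, List.reverse_append]
  simp [List.take_cons]

/-- Key lemma: any submultiset's sum is at most `sumLargest` at its cardinality. -/
lemma sum_le_sumLargest_card (S M : Multiset ℕ) (hSM : S ≤ M) :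
    S.sum ≤ sumLargest M S.card := by
  suffices h : ∀ n (S M : Multiset ℕ), S ≤ M → S.card = n → S.sum ≤ sumLargest M n by
    exact h S.card S M hSM rfl
  clear hSM S M
  intro n
  induction n with
  | zero =>
    intro S M hSM hn
    have : S = 0 := Multiset.card_eq_zero.1 hn
    simp [this]
  | succ n ih =>
    intro S M hSM hn
    have hS0 : S ≠ 0 := by
      intro h; rw [h] at hn; simp at hn
    have hM0 : M ≠ 0 := by
      intro h; rw [h] at hSM; exact hS0 (Multiset.le_zero.1 hSM)
    obtain ⟨m, hmM, hmmax⟩ := exists_max M hM0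
    obtain ⟨a, haS, hamax⟩ := exists_max S hS0
    have ham : a ≤ m := hmmax a (Multiset.mem_of_le hSM haS)
    have hkey : S.erase a ≤ M.erase m := by
      by_cases hmS : m ∈ S
      · have : a = m := le_antisymm ham (hamax m hmS)
        subst this
        exact Multiset.erase_le_erase a hSM
      · have hSle : S ≤ M.erase m := by
          rw [Multiset.le_iff_count]
          intro x
          rcases eq_or_ne x m with rfl | hx
          · simp [Multiset.count_eq_zero_of_notMem hmS]
          · rw [Multiset.count_erase_of_ne hx]
            exact Multiset.le_iff_count.1 hSM x
        exact (Multiset.erase_le a S).trans hSle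
    have hcard : (S.erase a).card = n := by
      rw [Multiset.card_erase_of_mem haS, hn]; rfl
    have hsum : S.sum = a + (S.erase a).sum := by
      conv_lhs => rw [← Multiset.cons_erase haS]
      simp
    rw [hsum]
    calc a + (S.erase a).sum ≤ m + sumLargest (M.erase m) n := by
          exact Nat.add_le_add ham (ih _ _ hkey hcard)
      _ = sumLargest M (n + 1) := (sumLargest_succ_max M m hmM hmmax n).symm

lemma take_coe_le (M : Multiset ℕ) (t : ℕ) :
    (↑(((M.sort (· ≤ ·)).reverse).take t) : Multiset ℕ) ≤ M := by
  have h1 : List.Sublist (((M.sort (· ≤ ·)).reverse).take t) ((M.sort (· ≤ ·)).reverse) :=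
    List.take_sublist _ _
  have h2 : (↑((M.sort (· ≤ ·)).reverse) : Multiset ℕ) = M := by
    rw [Multiset.coe_reverse, Multiset.sort_eq]
  have h3 : (↑(((M.sort (· ≤ ·)).reverse).take t) : Multiset ℕ) ≤
      ↑((M.sort (· ≤ ·)).reverse) := Multiset.coe_le.2 h1.subperm
  exact le_of_le_of_eq h3 h2

/-- Superadditivity. -/
lemma sumLargest_superadd (M N : Multiset ℕ) (a b : ℕ) :
    sumLargest M a + sumLargest N b ≤ sumLargest (M + N) (a + b) := by
  set S : Multiset ℕ := ↑(((M.sort (· ≤ ·)).reverse).take a) with hS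
  set T : Multiset ℕ := ↑(((N.sort (· ≤ ·)).reverse).take b) with hT
  have hSM : S ≤ M := take_coe_le M a
  have hTN : T ≤ N := take_coe_le N b
  have hST : S + T ≤ M + N := add_le_add hSM hTN
  have hcard : (S + T).card ≤ a + b := by
    rw [Multiset.card_add]
    apply Nat.add_le_add
    · simpa [hS] using List.length_take_le a ((M.sort (· ≤ ·)).reverse)
    · simpa [hT] using List.length_take_le b ((N.sort (· ≤ ·)).reverse)
  have h1 : (S + T).sum ≤ sumLargest (M + N) ((S + T).card) :=
    sum_le_sumLargest_card _ _ hST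
  have h2 : (S + T).sum = sumLargest M a + sumLargest N b := by
    rw [Multiset.sum_add]; rfl
  rw [← h2]
  exact h1.trans (sumLargest_mono _ hcard)

/-- The t largest of M+N decompose. -/
lemma sumLargest_add_decomp (M N : Multiset ℕ) (t : ℕ) :
    ∃ a b, a + b ≤ t ∧ sumLargest (M + N) t ≤ sumLargest M a + sumLargest N b := by
  set W : Multiset ℕ := ↑((((M + N).sort (· ≤ ·)).reverse).take t) with hW
  have hWMN : W ≤ M + N := take_coe_le (M + N) t
  have hcard : W.card ≤ t := by
    simpa [hW] using List.length_take_le t (((M + N).sort (· ≤ ·)).reverse)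
  set S : Multiset ℕ := W ∩ M with hSdef
  set T : Multiset ℕ := W - M with hTdef
  have hWdec : T + S = W := Multiset.sub_add_inter W M
  have hSM : S ≤ M := Multiset.inter_le_right
  have hTN : T ≤ N := by
    rw [hTdef, Multiset.sub_le_iff_le_add]
    rwa [add_comm] at hWMN
  have hsum : sumLargest (M + N) t = W.sum := rfl
  refine ⟨S.card, T.card, ?_, ?_⟩
  · have : S.card + T.card = W.card := by
      rw [← hWdec, Multiset.card_add, add_comm]
    omega
  · rw [hsum, ← hWdec, Multiset.sum_add]
    exact Nat.add_le_add (sum_le_sumLargest_card T N hTN) (sum_le_sumLargest_card S M hSM)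
      |>.trans_eq (by rw [add_comm]) |>.trans (le_refl _)

/-- if `p1` dominates `q1` (partitions of `n1`) and `p2` dominates `q2`
(partitions of `n2`), then the union `p1 ⊔ p2` dominates `q1 ⊔ q2` (partitions of `n1+n2`).
Partitions are multisets of positive parts; the union merges the multisets of parts. -/
theorem stmt_1 (n1 n2 : ℕ) (p1 q1 p2 q2 : Multiset ℕ)
    (hp1' : 0 ∉ p1) (hq1' : 0 ∉ q1) (hp2' : 0 ∉ p2) (hq2' : 0 ∉ q2)
    (hp1 : p1.sum = n1) (hq1 : q1.sum = n1) (hp2 : p2.sum = n2) (hq2 : q2.sum = n2)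
    (h1 : Dom p1 q1) (h2 : Dom p2 q2) : Dom (p1 + p2) (q1 + q2) := by
  intro t
  obtain ⟨a, b, hab, hdec⟩ := sumLargest_add_decomp q1 q2 t
  calc sumLargest (q1 + q2) t ≤ sumLargest q1 a + sumLargest q2 b := hdec
    _ ≤ sumLargest p1 a + sumLargest p2 b := Nat.add_le_add (h1 a) (h2 b)
    _ ≤ sumLargest (p1 + p2) (a + b) := sumLargest_superadd p1 p2 a b
    _ ≤ sumLargest (p1 + p2) t := sumLargest_mono _ hab
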